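/- Let r > 0, p ≥ 1, 0 < ε < r, m ∈ ℕ, let E = ℝ^m with the Euclidean inner product, K and E₁ finite-dimensional real inner product spaces, T : E → K and A : E → E₁ linear maps, g ∈ K, f, q ∈ E₁, u ∈ E, γ > 0, and B = p(r−ε)^{p−1}/(2ε) + 3((r−ε)^p − r^p)/(4ε²). Assume ‖T‖ < 1, (1/√2)‖A‖ < 1 (operator norms), and γ|B| < ω < 1. Then v* ∈ E minimizes v ↦ J_{ω,u}(v,q) := ‖Tv − g‖² + γ ∑_{i=1}^m W_r^{p,ε}(v_i) + ω‖v − u‖² + (1/2)‖Av − (f+q)‖² if and only if, for every i = 1, …, m, v*_i = S_p^{γ/3}( (1/3) { [(I − T*T) + (I − (1/2)A*A) + (1 − ω)I] v* + T*g + (1/2)A*(f+q) + ω u }_i ), where S_p^{γ/3}(ξ) is the unique minimizer over ℝ of t ↦ (t−ξ)² + (γ/3) W_r^{p,ε}(t). -/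

import Mathlib

/-- The smoothed truncated power potential `W_r^{p,ε}`. -/
noncomputable def Wpot (r p ε t : ℝ) : ℝ :=
  if |t| ≤ r - ε then |t| ^ p
  else if |t| ≤ r + ε then
    (p * (r - ε) ^ (p - 1) / (12 * ε ^ 2) +
        (p * (r - ε) ^ (p - 1) / (2 * ε) +
          3 * ((r - ε) ^ p - r ^ p) / (4 * ε ^ 2)) / (3 * ε)) *
      (|t| - (r + ε)) ^ 3 +
    (p * (r - ε) ^ (p - 1) / (2 * ε) + 3 * ((r - ε) ^ p - r ^ p) / (4 * ε ^ 2)) *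
      (|t| - (r + ε)) ^ 2 + r ^ p
  else r ^ p

namespace S17

noncomputable def Bc (r p ε : ℝ) : ℝ :=
  p * (r - ε) ^ (p - 1) / (2 * ε) + 3 * ((r - ε) ^ p - r ^ p) / (4 * ε ^ 2)

noncomputable def Ac (r p ε : ℝ) : ℝ :=
  p * (r - ε) ^ (p - 1) / (12 * ε ^ 2) + Bc r p ε / (3 * ε)

/-- unsigned version of the potential -/
noncomputable def Wp (r p ε x : ℝ) : ℝ :=
  if x ≤ r - ε then x ^ p
  else if x ≤ r + ε then
    Ac r p ε * (x - (r + ε)) ^ 3 + Bc r p ε * (x - (r + ε)) ^ 2 + r ^ p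
  else r ^ p

lemma Wpot_eq (r p ε t : ℝ) : Wpot r p ε t = Wp r p ε |t| := by
  simp [Wpot, Wp, Bc, Ac, abs_abs]

section
variable {r p ε : ℝ} (hr : 0 < r) (hp : 1 ≤ p) (hε0 : 0 < ε) (hεr : ε < r)

set_option linter.unusedSectionVars false

include hr hp hε0 hεr

lemma key_ineq : p * (r - ε) ^ (p - 1) * ε ≤ r ^ p - (r - ε) ^ p := by
  set σ : ℝ := r - ε with hσdef
  have hσ : 0 < σ := by simp [hσdef]; linarith
  have hs : (0:ℝ) ≤ ε / σ := by positivity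
  have hbern := one_add_mul_self_le_rpow_one_add (by linarith : (-1:ℝ) ≤ ε / σ) hp
  have h1 : ((1 + ε / σ) * σ) = r := by
    rw [add_mul, one_mul, div_mul_cancel₀ _ hσ.ne']
    show r - ε + ε = r; ring
  have h2 : ((1 + ε / σ)) ^ p * σ ^ p = r ^ p := by
    rw [← Real.mul_rpow (by positivity) hσ.le, h1]
  have h3 : σ ^ p = σ ^ (p - 1) * σ := by
    have := Real.rpow_add hσ (p - 1) 1
    rw [sub_add_cancel, Real.rpow_one] at this
    exact this
  have h4 : σ ^ p + p * σ ^ (p - 1) * ε ≤ r ^ p := by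
    have hb2 := mul_le_mul_of_nonneg_right hbern (Real.rpow_pos_of_pos hσ p).le
    rw [h2] at hb2
    calc σ ^ p + p * σ ^ (p - 1) * ε = (1 + p * (ε / σ)) * σ ^ p := by
          rw [h3]; field_simp
      _ ≤ r ^ p := hb2
  linarith

lemma P1_pos : 0 < p * (r - ε) ^ (p - 1) := by
  have : (0:ℝ) < r - ε := by linarith
  positivity

lemma Bc_mul : Bc r p ε * (4 * ε ^ 2) ≤ -(ε * (p * (r - ε) ^ (p - 1))) := by
  have key := key_ineq hr hp hε0 hεr
  have e1 : Bc r p ε * (4 * ε ^ 2) = 2 * ε * (p * (r - ε) ^ (p - 1)) + 3 * ((r - ε) ^ p - r ^ p) := by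
    rw [Bc]; field_simp; ring
  nlinarith

lemma Bc_neg : Bc r p ε < 0 := by
  have h1 := Bc_mul hr hp hε0 hεr
  have h2 := P1_pos hr hp hε0 hεr
  nlinarith [sq_nonneg ε, mul_pos hε0 (mul_pos hε0 hε0)]

lemma Ac_e : Ac r p ε * (12 * ε ^ 2) = p * (r - ε) ^ (p - 1) + 4 * ε * Bc r p ε := by
  rw [Ac]; field_simp; ring

lemma Ac_nonpos : Ac r p ε ≤ 0 := by
  have e2 := Ac_e hr hp hε0 hεr
  have h1 := Bc_mul hr hp hε0 hεr
  have h2 : 4 * ε * Bc r p ε ≤ -(p * (r - ε) ^ (p - 1)) := by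
    have : Bc r p ε * (4 * ε ^ 2) = (4 * ε * Bc r p ε) * ε := by ring
    rw [this] at h1
    nlinarith
  nlinarith [mul_pos hε0 hε0]

lemma pi_left_val :
    Ac r p ε * ((r - ε) - (r + ε)) ^ 3 + Bc r p ε * ((r - ε) - (r + ε)) ^ 2 + r ^ p
      = (r - ε) ^ p := by
  rw [Ac, Bc]; field_simp; ring

lemma pi_left_deriv :
    3 * Ac r p ε * ((r - ε) - (r + ε)) ^ 2 + 2 * Bc r p ε * ((r - ε) - (r + ε))
      = p * (r - ε) ^ (p - 1) := by
  rw [Ac]; field_simp; ring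

end

noncomputable def Wd (r p ε x : ℝ) : ℝ :=
  if x ≤ r - ε then p * x ^ (p - 1)
  else if x ≤ r + ε then
    3 * Ac r p ε * (x - (r + ε)) ^ 2 + 2 * Bc r p ε * (x - (r + ε))
  else 0

section
variable {r p ε : ℝ} (hr : 0 < r) (hp : 1 ≤ p) (hε0 : 0 < ε) (hεr : ε < r)

set_option linter.unusedSectionVars false

include hr hp hε0 hεr

lemma Wp_cont : Continuous (Wp r p ε) := by
  have h1 : Continuous fun x : ℝ => x ^ p := Real.continuous_rpow_const (by linarith)
  have h2 : Continuous fun x : ℝ =>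
      Ac r p ε * (x - (r + ε)) ^ 3 + Bc r p ε * (x - (r + ε)) ^ 2 + r ^ p := by continuity
  unfold Wp
  refine Continuous.if_le h1
    (Continuous.if_le h2 continuous_const continuous_id continuous_const ?_)
    continuous_id continuous_const ?_
  · intro x hx
    try simp only [id] at hx
    subst hx
    simp
  · intro x hx
    try simp only [id] at hx
    subst hx
    rw [if_pos (by linarith : r - ε ≤ r + ε)]
    exact (pi_left_val hr hp hε0 hεr).symm

omit hr hp hε0 hεr in
lemma hasDerivAt_glue {f g F : ℝ → ℝ} {a b c d : ℝ} (ha : a < c) (hb : c < b)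
    (hf : HasDerivAt f d c) (hg : HasDerivAt g d c)
    (hFc : F c = f c) (hgc : g c = f c)
    (hl : ∀ y, a < y → y < c → F y = f y) (hrr : ∀ y, c < y → y < b → F y = g y) :
    HasDerivAt F d c := by
  have h1 : HasDerivWithinAt F d (Set.Iic c) c := by
    refine (hf.hasDerivWithinAt).congr_of_eventuallyEq ?_ hFc
    filter_upwards [Ioc_mem_nhdsLE ha] with y hy
    rcases lt_or_eq_of_le hy.2 with h | h
    · exact hl y hy.1 h
    · rw [h, hFc]
  have h2 : HasDerivWithinAt F d (Set.Ici c) c := by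
    refine (hg.hasDerivWithinAt).congr_of_eventuallyEq ?_ (by rw [hFc, hgc])
    filter_upwards [Ico_mem_nhdsGE hb] with y hy
    rcases eq_or_lt_of_le hy.1 with h | h
    · rw [← h, hFc, hgc]
    · exact hrr y h hy.2
  have h3 := h1.union h2
  rw [Set.Iic_union_Ici] at h3
  exact h3.hasDerivAt (by simp)

lemma pi_hasDerivAt (x : ℝ) :
    HasDerivAt (fun y : ℝ => Ac r p ε * (y - (r + ε)) ^ 3 + Bc r p ε * (y - (r + ε)) ^ 2 + r ^ p)
      (3 * Ac r p ε * (x - (r + ε)) ^ 2 + 2 * Bc r p ε * (x - (r + ε))) x := by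
  have h1 := (((hasDerivAt_id x).sub_const (r + ε)).pow 3).const_mul (Ac r p ε)
  have h2 := (((hasDerivAt_id x).sub_const (r + ε)).pow 2).const_mul (Bc r p ε)
  have h3 := (h1.add h2).add_const (r ^ p)
  convert h3 using 1 <;> try rfl
  simp [id]
  ring

lemma Wp_hasDerivAt (x : ℝ) : HasDerivAt (Wp r p ε) (Wd r p ε x) x := by
  have hrpow : ∀ y : ℝ, HasDerivAt (fun t : ℝ => t ^ p) (p * y ^ (p - 1)) y := fun y =>
    Real.hasDerivAt_rpow_const (Or.inr hp)
  have hπ := pi_hasDerivAt hr hp hε0 hεr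
  rcases lt_trichotomy x (r - ε) with hx | hx | hx
  · have he : ∀ᶠ y in nhds x, Wp r p ε y = y ^ p := by
      filter_upwards [Iio_mem_nhds hx] with y hy
      rw [Wp, if_pos (le_of_lt hy)]
    rw [Wd, if_pos hx.le]
    exact (hrpow x).congr_of_eventuallyEq he
  · subst hx
    rw [Wd, if_pos le_rfl]
    refine hasDerivAt_glue (a := r - ε - 1) (b := r + ε) (c := r - ε)
      (g := fun y : ℝ => Ac r p ε * (y - (r + ε)) ^ 3 + Bc r p ε * (y - (r + ε)) ^ 2 + r ^ p)
      (by linarith) (by linarith) (hrpow (r - ε)) ?_ ?_ ?_ ?_ ?_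
    · have := pi_left_deriv hr hp hε0 hεr
      rw [← this]
      exact hπ (r - ε)
    · rw [Wp, if_pos le_rfl]
    · exact pi_left_val hr hp hε0 hεr
    · intro y _ hy; rw [Wp, if_pos hy.le]
    · intro y hy hy2
      rw [Wp, if_neg (by linarith), if_pos hy2.le]
  · rcases lt_trichotomy x (r + ε) with hx2 | hx2 | hx2
    · have he : ∀ᶠ y in nhds x,
          Wp r p ε y = Ac r p ε * (y - (r + ε)) ^ 3 + Bc r p ε * (y - (r + ε)) ^ 2 + r ^ p := by
        filter_upwards [Ioo_mem_nhds hx hx2] with y hy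
        rw [Wp, if_neg (by linarith [hy.1]), if_pos (le_of_lt hy.2)]
      rw [Wd, if_neg (by linarith), if_pos hx2.le]
      exact (hπ x).congr_of_eventuallyEq he
    · subst hx2
      rw [Wd, if_neg (by linarith), if_pos le_rfl]
      have hval : 3 * Ac r p ε * ((r + ε) - (r + ε)) ^ 2 + 2 * Bc r p ε * ((r + ε) - (r + ε)) = 0 := by
        ring
      rw [show (3 * Ac r p ε * ((r + ε) - (r + ε)) ^ 2 + 2 * Bc r p ε * ((r + ε) - (r + ε))) = (0:ℝ) from hval]
      refine hasDerivAt_glue (a := r - ε) (b := r + ε + 1) (c := r + ε) (by linarith) (by linarith)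
          (f := fun y : ℝ =>
          Ac r p ε * (y - (r + ε)) ^ 3 + Bc r p ε * (y - (r + ε)) ^ 2 + r ^ p)
          (g := fun _ : ℝ => r ^ p) ?_ (hasDerivAt_const _ _) ?_ ?_ ?_ ?_
      · have := hπ (r + ε)
        simpa using this
      · rw [Wp, if_neg (by linarith), if_pos le_rfl]
      · simp
      · intro y hy hy2
        rw [Wp, if_neg (by linarith), if_pos hy2.le]
      · intro y hy _
        rw [Wp, if_neg (by linarith), if_neg (by linarith)]
    · have he : ∀ᶠ y in nhds x, Wp r p ε y = r ^ p := by
        filter_upwards [Ioi_mem_nhds hx2] with y hy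
        rw [Wp, if_neg (by linarith [Set.mem_Ioi.1 hy]), if_neg (by linarith [Set.mem_Ioi.1 hy])]
      rw [Wd, if_neg (by linarith), if_neg (by linarith)]
      exact (hasDerivAt_const x (r ^ p)).congr_of_eventuallyEq he


lemma Wp_eq1 {x : ℝ} (hx : x ≤ r - ε) : Wp r p ε x = x ^ p := by rw [Wp, if_pos hx]

lemma Wp_eq2 {x : ℝ} (hx1 : r - ε ≤ x) (hx2 : x ≤ r + ε) :
    Wp r p ε x = Ac r p ε * (x - (r + ε)) ^ 3 + Bc r p ε * (x - (r + ε)) ^ 2 + r ^ p := by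
  rcases eq_or_lt_of_le hx1 with h | h
  · rw [Wp, if_pos h.symm.le, ← h]
    exact (pi_left_val hr hp hε0 hεr).symm
  · rw [Wp, if_neg (by linarith), if_pos hx2]

lemma Wp_eq3 {x : ℝ} (hx : r + ε ≤ x) : Wp r p ε x = r ^ p := by
  rcases eq_or_lt_of_le hx with h | h
  · rw [Wp, if_neg (by linarith), if_pos h.symm.le, ← h]; ring
  · rw [Wp, if_neg (by linarith), if_neg (by linarith)]

lemma Wd_eq2 {x : ℝ} (hx1 : r - ε ≤ x) (hx2 : x ≤ r + ε) :
    Wd r p ε x = 3 * Ac r p ε * (x - (r + ε)) ^ 2 + 2 * Bc r p ε * (x - (r + ε)) := by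
  rcases eq_or_lt_of_le hx1 with h | h
  · rw [Wd, if_pos h.symm.le, ← h]
    exact (pi_left_deriv hr hp hε0 hεr).symm
  · rw [Wd, if_neg (by linarith), if_pos hx2]

lemma Wd_eq3 {x : ℝ} (hx : r + ε ≤ x) : Wd r p ε x = 0 := by
  rcases eq_or_lt_of_le hx with h | h
  · rw [Wd, if_neg (by linarith), if_pos h.symm.le, ← h]; ring
  · rw [Wd, if_neg (by linarith), if_neg (by linarith)]

lemma middle_factor {x : ℝ} (hx1 : r - ε ≤ x) (hx2 : x ≤ r + ε) :
    3 * Ac r p ε * (x - (r + ε)) + 2 * Bc r p ε ≤ 0 := by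
  have hAc := Ac_nonpos hr hp hε0 hεr
  have e := Ac_e hr hp hε0 hεr
  have hP := P1_pos hr hp hε0 hεr
  have h1 : 0 ≤ (-Ac r p ε) * ((x - (r + ε)) + 2 * ε) :=
    mul_nonneg (by linarith) (by linarith)
  nlinarith [mul_pos hε0 hε0, mul_nonneg h1 hε0.le]

lemma Wd_nonneg {x : ℝ} (hx : 0 ≤ x) : 0 ≤ Wd r p ε x := by
  rcases le_total x (r - ε) with h | h
  · rw [Wd, if_pos h]
    have h2 : (0:ℝ) ≤ x ^ (p - 1) := Real.rpow_nonneg hx _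
    nlinarith
  · rcases le_total x (r + ε) with h2 | h2
    · rw [Wd_eq2 hr hp hε0 hεr h h2]
      have hf := middle_factor hr hp hε0 hεr h h2
      nlinarith [mul_nonneg (by linarith : (0:ℝ) ≤ (r + ε) - x)
        (by linarith : (0:ℝ) ≤ -(3 * Ac r p ε * (x - (r + ε)) + 2 * Bc r p ε))]
    · rw [Wd_eq3 hr hp hε0 hεr h2]

omit hr hp hε0 hεr in
lemma monotoneOn_glue {f : ℝ → ℝ} {a b : ℝ} (hab : a ≤ b)
    (h1 : MonotoneOn f (Set.Icc a b)) (h2 : MonotoneOn f (Set.Ici b)) :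
    MonotoneOn f (Set.Ici a) := by
  intro x hx y hy hxy
  rcases le_total y b with h | h
  · exact h1 ⟨hx, hxy.trans h⟩ ⟨hy, h⟩ hxy
  · rcases le_total x b with h' | h'
    · exact (h1 ⟨hx, h'⟩ ⟨hab, le_rfl⟩ h').trans (h2 Set.self_mem_Ici h h)
    · exact h2 h' h hxy

end

section
variable {r p ε γ ω : ℝ} (hr : 0 < r) (hp : 1 ≤ p) (hε0 : 0 < ε) (hεr : ε < r)
  (hγ : 0 < γ) (hω : γ * (-(Bc r p ε)) ≤ ω)

set_option linter.unusedSectionVars false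

include hr hp hε0 hεr hγ hω

lemma omega_pos : 0 < ω :=
  lt_of_lt_of_le (mul_pos hγ (by linarith [Bc_neg hr hp hε0 hεr])) hω

lemma phi_mono : MonotoneOn (fun x => 2 * ω * x + γ * Wd r p ε x) (Set.Ici 0) := by
  have hω0 := omega_pos hr hp hε0 hεr hγ hω
  have hre : (0:ℝ) ≤ r - ε := by linarith
  have m1 : MonotoneOn (fun x => 2 * ω * x + γ * Wd r p ε x) (Set.Icc 0 (r - ε)) := by
    intro x hx y hy hxy
    simp only
    rw [Wd, if_pos hx.2, Wd, if_pos hy.2]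
    have h1 : x ^ (p - 1) ≤ y ^ (p - 1) :=
      Real.rpow_le_rpow hx.1 hxy (by linarith)
    have h2 := mul_le_mul_of_nonneg_left h1 (by positivity : (0:ℝ) ≤ γ * p)
    nlinarith
  have m2 : MonotoneOn (fun x => 2 * ω * x + γ * Wd r p ε x) (Set.Icc (r - ε) (r + ε)) := by
    intro x hx y hy hxy
    simp only
    rw [Wd_eq2 hr hp hε0 hεr hx.1 hx.2, Wd_eq2 hr hp hε0 hεr hy.1 hy.2]
    have hAc := Ac_nonpos hr hp hε0 hεr
    have hint1 : 0 ≤ γ * ((-Ac r p ε) * (-((x - (r + ε)) + (y - (r + ε)))) * (y - x)) := by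
      apply mul_nonneg hγ.le
      apply mul_nonneg (mul_nonneg (by linarith) (by linarith [hx.2, hy.2]))
      linarith
    have hint2 : 0 ≤ (ω + γ * Bc r p ε) * (y - x) :=
      mul_nonneg (by linarith) (by linarith)
    nlinarith [hint1, hint2]
  have m3 : MonotoneOn (fun x => 2 * ω * x + γ * Wd r p ε x) (Set.Ici (r + ε)) := by
    intro x hx y hy hxy
    simp only
    rw [Wd_eq3 hr hp hε0 hεr hx, Wd_eq3 hr hp hε0 hεr hy]
    nlinarith
  exact monotoneOn_glue hre m1 (monotoneOn_glue (by linarith) m2 m3)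

lemma hfull_hasDerivAt (x : ℝ) :
    HasDerivAt (fun x => ω * x ^ 2 + γ * Wp r p ε x) (2 * ω * x + γ * Wd r p ε x) x := by
  have h1 := (hasDerivAt_pow 2 x).const_mul ω
  have h2 := (Wp_hasDerivAt hr hp hε0 hεr x).const_mul γ
  convert h1.add h2 using 1 <;> try rfl
  simp
  ring

lemma hfull_cont : Continuous (fun x => ω * x ^ 2 + γ * Wp r p ε x) :=
  (continuous_const.mul (continuous_pow 2)).add (continuous_const.mul (Wp_cont hr hp hε0 hεr))

lemma h_mono : MonotoneOn (fun x => ω * x ^ 2 + γ * Wp r p ε x) (Set.Ici 0) := by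
  have hω0 := omega_pos hr hp hε0 hεr hγ hω
  apply monotoneOn_of_deriv_nonneg (convex_Ici 0)
    (hfull_cont hr hp hε0 hεr hγ hω).continuousOn
  · intro x hx
    exact (hfull_hasDerivAt hr hp hε0 hεr hγ hω x).differentiableAt.differentiableWithinAt
  · intro x hx
    rw [interior_Ici] at hx
    rw [(hfull_hasDerivAt hr hp hε0 hεr hγ hω x).deriv]
    have h2 := Wd_nonneg hr hp hε0 hεr (le_of_lt hx)
    have hx' : (0:ℝ) < x := hx
    nlinarith [mul_nonneg hγ.le h2, mul_pos hω0 hx']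

lemma h_convex : ConvexOn ℝ (Set.Ici 0) (fun x => ω * x ^ 2 + γ * Wp r p ε x) := by
  apply MonotoneOn.convexOn_of_deriv (convex_Ici 0)
    (hfull_cont hr hp hε0 hεr hγ hω).continuousOn
  · intro x hx
    exact (hfull_hasDerivAt hr hp hε0 hεr hγ hω x).differentiableAt.differentiableWithinAt
  · intro x hx y hy hxy
    rw [interior_Ici] at hx hy
    rw [(hfull_hasDerivAt hr hp hε0 hεr hγ hω x).deriv,
      (hfull_hasDerivAt hr hp hε0 hεr hγ hω y).deriv]
    exact phi_mono hr hp hε0 hεr hγ hω (Set.mem_Ici.2 (le_of_lt hx)) (Set.mem_Ici.2 (le_of_lt hy)) hxy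

lemma F_convex : ConvexOn ℝ Set.univ (fun t => ω * t ^ 2 + γ * Wpot r p ε t) := by
  have hc := h_convex hr hp hε0 hεr hγ hω
  have hm := h_mono hr hp hε0 hεr hγ hω
  refine ⟨convex_univ, ?_⟩
  intro x _ y _ a b ha hb hab
  have key : ∀ t : ℝ, ω * t ^ 2 + γ * Wpot r p ε t = ω * |t| ^ 2 + γ * Wp r p ε |t| := by
    intro t; rw [Wpot_eq, sq_abs]
  simp only [smul_eq_mul, key]
  have habs : |a * x + b * y| ≤ a * |x| + b * |y| := by
    calc |a * x + b * y| ≤ |a * x| + |b * y| := abs_add_le _ _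
      _ = a * |x| + b * |y| := by rw [abs_mul, abs_mul, abs_of_nonneg ha, abs_of_nonneg hb]
  have h1 : ω * |a * x + b * y| ^ 2 + γ * Wp r p ε |a * x + b * y| ≤
      ω * (a * |x| + b * |y|) ^ 2 + γ * Wp r p ε (a * |x| + b * |y|) :=
    hm (Set.mem_Ici.2 (abs_nonneg _)) (Set.mem_Ici.2 (add_nonneg (mul_nonneg ha (abs_nonneg _)) (mul_nonneg hb (abs_nonneg _)))) habs
  have h2 := hc.2 (Set.mem_Ici.2 (abs_nonneg x)) (Set.mem_Ici.2 (abs_nonneg y)) ha hb hab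
  simp only [smul_eq_mul] at h2
  exact h1.trans h2


lemma strong_min (hω3 : ω < 3) (s ξ : ℝ)
    (hmin : ∀ u : ℝ, (s - ξ) ^ 2 + γ / 3 * Wpot r p ε s ≤ (u - ξ) ^ 2 + γ / 3 * Wpot r p ε u)
    (t : ℝ) :
    3 * (s - ξ) ^ 2 + γ * Wpot r p ε s + (3 - ω) * (t - s) ^ 2 ≤
      3 * (t - ξ) ^ 2 + γ * Wpot r p ε t := by
  have hFc := F_convex hr hp hε0 hεr hγ hω
  have haff : ConvexOn ℝ Set.univ
      (fun u : ℝ => (2 * (3 - ω) * s - 6 * ξ) * u + (3 * ξ ^ 2 - (3 - ω) * s ^ 2)) :=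
    ⟨convex_univ, fun x _ y _ a b ha hb hab => by
      simp only [smul_eq_mul]
      apply le_of_eq
      linear_combination (3 * ξ ^ 2 - (3 - ω) * s ^ 2) * hab.symm⟩
  have hq : ConvexOn ℝ Set.univ
      (fun u : ℝ => 3 * (u - ξ) ^ 2 + γ * Wpot r p ε u - (3 - ω) * (u - s) ^ 2) := by
    have he : (fun u : ℝ => 3 * (u - ξ) ^ 2 + γ * Wpot r p ε u - (3 - ω) * (u - s) ^ 2)
        = fun u : ℝ => (ω * u ^ 2 + γ * Wpot r p ε u) +
            ((2 * (3 - ω) * s - 6 * ξ) * u + (3 * ξ ^ 2 - (3 - ω) * s ^ 2)) := by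
      funext u; ring
    rw [he]
    exact hFc.add haff
  have key : ∀ l : ℝ, 0 < l → l ≤ 1 →
      (3 * (s - ξ) ^ 2 + γ * Wpot r p ε s) -
        (3 * (t - ξ) ^ 2 + γ * Wpot r p ε t - (3 - ω) * (t - s) ^ 2)
        ≤ (3 - ω) * l * (t - s) ^ 2 := by
    intro l hl0 hl1
    have hconv := hq.2 (Set.mem_univ s) (Set.mem_univ t)
      (by linarith : (0:ℝ) ≤ 1 - l) hl0.le (by ring)
    simp only [smul_eq_mul] at hconv
    have hg := hmin ((1 - l) * s + l * t)
    have hg3 : 3 * (s - ξ) ^ 2 + γ * Wpot r p ε s ≤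
        3 * ((1 - l) * s + l * t - ξ) ^ 2 + γ * Wpot r p ε ((1 - l) * s + l * t) := by
      nlinarith [hg]
    nlinarith [hconv, hg3, hl0, sq_nonneg (t - s)]
  by_contra hcon
  push_neg at hcon
  set D : ℝ := (3 * (s - ξ) ^ 2 + γ * Wpot r p ε s) -
      (3 * (t - ξ) ^ 2 + γ * Wpot r p ε t - (3 - ω) * (t - s) ^ 2) with hD
  have hD0 : 0 < D := by rw [hD]; linarith
  set M : ℝ := (3 - ω) * (t - s) ^ 2 with hM
  have hM0 : 0 ≤ M := by rw [hM]; exact mul_nonneg (by linarith) (sq_nonneg _)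
  set l : ℝ := min 1 (D / (2 * (M + 1))) with hl
  have hl0 : 0 < l := lt_min one_pos (by positivity)
  have hl1 : l ≤ 1 := min_le_left _ _
  have h1 := key l hl0 hl1
  have h2 : (3 - ω) * l * (t - s) ^ 2 = M * l := by rw [hM]; ring
  rw [h2] at h1
  have h3 : M * l ≤ (M + 1) * l := by nlinarith [hl0.le]
  have h4 : (M + 1) * l ≤ (M + 1) * (D / (2 * (M + 1))) :=
    mul_le_mul_of_nonneg_left (min_le_right _ _) (by linarith)
  have h5 : (M + 1) * (D / (2 * (M + 1))) = D / 2 := by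
    field_simp
  linarith

end

end S17


set_option maxHeartbeats 1600000

open RealInnerProductSpace

/-- Fixed-point characterization of the minimizer of
`J_{ω,u}(v,q) = ‖Tv − g‖² + γ ∑ᵢ W_r^{p,ε}(vᵢ) + ω‖v − u‖² + ½‖Av − (f+q)‖²` via the
thresholding function `S_p^{γ/3}` applied componentwise to
`(1/3){[(I − T*T) + (I − ½A*A) + (1 − ω)I]v* + T*g + ½A*(f+q) + ωu}`. -/
theorem statement17 (r p ε : ℝ) (hr : 0 < r) (hp : 1 ≤ p) (hε0 : 0 < ε) (hεr : ε < r)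
    (m : ℕ) {K E₁ : Type*}
    [NormedAddCommGroup K] [InnerProductSpace ℝ K] [FiniteDimensional ℝ K]
    [NormedAddCommGroup E₁] [InnerProductSpace ℝ E₁] [FiniteDimensional ℝ E₁]
    (T : EuclideanSpace ℝ (Fin m) →L[ℝ] K) (A : EuclideanSpace ℝ (Fin m) →L[ℝ] E₁)
    (g : K) (f q : E₁) (u : EuclideanSpace ℝ (Fin m)) (γ ω : ℝ) (hγ : 0 < γ)
    (hT : ‖T‖ < 1) (hAn : 1 / Real.sqrt 2 * ‖A‖ < 1)
    (hωl : γ * |p * (r - ε) ^ (p - 1) / (2 * ε) +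
        3 * ((r - ε) ^ p - r ^ p) / (4 * ε ^ 2)| < ω)
    (hωu : ω < 1)
    (S : ℝ → ℝ)
    (hS : ∀ ξ s : ℝ, (S ξ - ξ) ^ 2 + γ / 3 * Wpot r p ε (S ξ) ≤
      (s - ξ) ^ 2 + γ / 3 * Wpot r p ε s)
    (vstar : EuclideanSpace ℝ (Fin m)) :
    (∀ v : EuclideanSpace ℝ (Fin m),
        ‖T vstar - g‖ ^ 2 + γ * ∑ i, Wpot r p ε (vstar i) + ω * ‖vstar - u‖ ^ 2 +
            1 / 2 * ‖A vstar - (f + q)‖ ^ 2 ≤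
          ‖T v - g‖ ^ 2 + γ * ∑ i, Wpot r p ε (v i) + ω * ‖v - u‖ ^ 2 +
            1 / 2 * ‖A v - (f + q)‖ ^ 2) ↔
      ∀ i : Fin m, vstar i = S ((3 : ℝ)⁻¹ *
        (((vstar - (ContinuousLinearMap.adjoint T) (T vstar)) +
            (vstar - (2 : ℝ)⁻¹ • (ContinuousLinearMap.adjoint A) (A vstar)) +
            (1 - ω) • vstar +
            (ContinuousLinearMap.adjoint T) g +
            (2 : ℝ)⁻¹ • (ContinuousLinearMap.adjoint A) (f + q) + ω • u) i)) := by
  classical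
  have hBneg := S17.Bc_neg hr hp hε0 hεr
  have hωabs : γ * (-(S17.Bc r p ε)) ≤ ω := by
    have habs : |S17.Bc r p ε| = -(S17.Bc r p ε) := abs_of_neg hBneg
    have h2 : γ * |S17.Bc r p ε| < ω := hωl
    rw [habs] at h2
    exact h2.le
  have hω0 : 0 < ω := S17.omega_pos hr hp hε0 hεr hγ hωabs
  set hv : EuclideanSpace ℝ (Fin m) :=
    (vstar - (ContinuousLinearMap.adjoint T) (T vstar)) +
      (vstar - (2 : ℝ)⁻¹ • (ContinuousLinearMap.adjoint A) (A vstar)) +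
      (1 - ω) • vstar +
      (ContinuousLinearMap.adjoint T) g +
      (2 : ℝ)⁻¹ • (ContinuousLinearMap.adjoint A) (f + q) + ω • u with hhv
  set ξ : EuclideanSpace ℝ (Fin m) := (3 : ℝ)⁻¹ • hv with hξ
  have hξi : ∀ i, ξ i = (3 : ℝ)⁻¹ * hv i := fun i => rfl
  have normsq : ∀ x : EuclideanSpace ℝ (Fin m), ‖x‖ ^ 2 = ∑ i, (x i) ^ 2 := by
    intro x
    rw [EuclideanSpace.norm_eq, Real.sq_sqrt (by positivity)]
    exact Finset.sum_congr rfl fun i _ => by rw [Real.norm_eq_abs, sq_abs]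
  have hmain : ∀ d : EuclideanSpace ℝ (Fin m),
      6 * ⟪vstar - ξ, d⟫ =
        2 * ⟪T vstar - g, T d⟫ + 2 * ω * ⟪vstar - u, d⟫ + ⟪A vstar - (f + q), A d⟫ := by
    intro d
    simp only [hξ, hhv, inner_sub_left, inner_add_left, real_inner_smul_left,
      ContinuousLinearMap.adjoint_inner_left, map_add]
    ring
  have keyid : ∀ v : EuclideanSpace ℝ (Fin m),
      (‖T v - g‖ ^ 2 + γ * ∑ i, Wpot r p ε (v i) + ω * ‖v - u‖ ^ 2 +
          1 / 2 * ‖A v - (f + q)‖ ^ 2)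
      - (‖T vstar - g‖ ^ 2 + γ * ∑ i, Wpot r p ε (vstar i) + ω * ‖vstar - u‖ ^ 2 +
          1 / 2 * ‖A vstar - (f + q)‖ ^ 2)
      = (∑ i, (3 * (v i - ξ i) ^ 2 + γ * Wpot r p ε (v i)))
        - (∑ i, (3 * (vstar i - ξ i) ^ 2 + γ * Wpot r p ε (vstar i)))
        - ((3 - ω) * ‖v - vstar‖ ^ 2 - ‖T (v - vstar)‖ ^ 2
            - 1 / 2 * ‖A (v - vstar)‖ ^ 2) := by
    intro v
    have hT2 : ‖T v - g‖ ^ 2 = ‖T vstar - g‖ ^ 2 + 2 * ⟪T vstar - g, T (v - vstar)⟫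
        + ‖T (v - vstar)‖ ^ 2 := by
      rw [show T v - g = (T vstar - g) + T (v - vstar) by rw [map_sub]; abel]
      exact norm_add_sq_real _ _
    have hA2 : ‖A v - (f + q)‖ ^ 2 = ‖A vstar - (f + q)‖ ^ 2
        + 2 * ⟪A vstar - (f + q), A (v - vstar)⟫ + ‖A (v - vstar)‖ ^ 2 := by
      rw [show A v - (f + q) = (A vstar - (f + q)) + A (v - vstar) by rw [map_sub]; abel]
      exact norm_add_sq_real _ _
    have hu2 : ‖v - u‖ ^ 2 = ‖vstar - u‖ ^ 2 + 2 * ⟪vstar - u, v - vstar⟫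
        + ‖v - vstar‖ ^ 2 := by
      rw [show v - u = (vstar - u) + (v - vstar) by abel]
      exact norm_add_sq_real _ _
    have hx1 : ∑ i, (v i - ξ i) ^ 2 = ‖vstar - ξ‖ ^ 2 + 2 * ⟪vstar - ξ, v - vstar⟫
        + ‖v - vstar‖ ^ 2 := by
      have e : ∑ i, (v i - ξ i) ^ 2 = ‖v - ξ‖ ^ 2 := by
        rw [normsq (v - ξ)]; exact Finset.sum_congr rfl fun i _ => rfl
      rw [e, show v - ξ = (vstar - ξ) + (v - vstar) by abel]
      exact norm_add_sq_real _ _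
    have hx2 : ∑ i, (vstar i - ξ i) ^ 2 = ‖vstar - ξ‖ ^ 2 := by
      rw [normsq (vstar - ξ)]; exact Finset.sum_congr rfl fun i _ => rfl
    have hm := hmain (v - vstar)
    simp only [Finset.sum_add_distrib, ← Finset.mul_sum]
    rw [hT2, hA2, hu2, hx1, hx2]
    ring_nf
    ring_nf at hm
    linarith [hm]
  have hDle : ∀ d : EuclideanSpace ℝ (Fin m),
      (1 - ω) * ‖d‖ ^ 2 ≤ (3 - ω) * ‖d‖ ^ 2 - ‖T d‖ ^ 2 - 1 / 2 * ‖A d‖ ^ 2 := by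
    intro d
    have h1 := T.le_opNorm d
    have h2 := A.le_opNorm d
    have hTn : (0:ℝ) ≤ ‖T‖ := norm_nonneg _
    have hAn0 : (0:ℝ) ≤ ‖A‖ := norm_nonneg _
    have hd0 : (0:ℝ) ≤ ‖d‖ := norm_nonneg _
    have hT2 : ‖T d‖ ^ 2 ≤ ‖d‖ ^ 2 := by
      have h3 : ‖T d‖ * ‖T d‖ ≤ (‖T‖ * ‖d‖) * (‖T‖ * ‖d‖) :=
        mul_le_mul h1 h1 (norm_nonneg _) (by positivity)
      have h3b : ‖T‖ * ‖T‖ ≤ 1 := mul_le_one₀ hT.le hTn hT.le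
      have h3c : ‖T‖ * ‖T‖ * (‖d‖ * ‖d‖) ≤ ‖d‖ * ‖d‖ := by
        nlinarith [mul_le_mul_of_nonneg_right h3b (mul_nonneg hd0 hd0)]
      nlinarith [h3, h3c]
    have hsq2 : Real.sqrt 2 ^ 2 = 2 := Real.sq_sqrt (by norm_num)
    have hs20 : (0:ℝ) < Real.sqrt 2 := Real.sqrt_pos.2 (by norm_num)
    have hAlt : ‖A‖ < Real.sqrt 2 := by
      have h3 := mul_lt_mul_of_pos_left hAn hs20
      have h4 : Real.sqrt 2 * (1 / Real.sqrt 2 * ‖A‖) = ‖A‖ := by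
        field_simp
      rw [h4, mul_one] at h3
      exact h3
    have hA2 : ‖A d‖ ^ 2 ≤ 2 * ‖d‖ ^ 2 := by
      have h4 : ‖A d‖ * ‖A d‖ ≤ (‖A‖ * ‖d‖) * (‖A‖ * ‖d‖) :=
        mul_le_mul h2 h2 (norm_nonneg _) (by positivity)
      have h5 : ‖A‖ ^ 2 ≤ 2 := by nlinarith [hAlt, hAn0, hsq2, hs20.le]
      have h6 : ‖A‖ ^ 2 * (‖d‖ * ‖d‖) ≤ 2 * (‖d‖ * ‖d‖) :=
        mul_le_mul_of_nonneg_right h5 (mul_nonneg hd0 hd0)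
      nlinarith [h4, h6]
    linarith
  constructor
  · intro hmin i
    set s : ℝ := S ((3 : ℝ)⁻¹ * hv i) with hsdef
    set v : EuclideanSpace ℝ (Fin m) := WithLp.toLp 2 (Function.update vstar i s) with hvdef
    have hvi : v i = s := Function.update_self i s vstar
    have hvj : ∀ j, j ≠ i → v j = vstar j := fun j hj => Function.update_of_ne hj s vstar
    have h0 := hmin v
    have hkey := keyid v
    have hsum : (∑ j, (3 * (v j - ξ j) ^ 2 + γ * Wpot r p ε (v j)))
        - (∑ j, (3 * (vstar j - ξ j) ^ 2 + γ * Wpot r p ε (vstar j)))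
        = (3 * (s - ξ i) ^ 2 + γ * Wpot r p ε s)
          - (3 * (vstar i - ξ i) ^ 2 + γ * Wpot r p ε (vstar i)) := by
      rw [← Finset.sum_sub_distrib]
      rw [Finset.sum_eq_single i (fun b _ hb => by rw [hvj b hb]; ring)
        (fun h => absurd (Finset.mem_univ i) h)]
      rw [hvi]
    have hnormd : ‖v - vstar‖ ^ 2 = (s - vstar i) ^ 2 := by
      rw [normsq (v - vstar)]
      rw [Finset.sum_eq_single i (fun b _ hb => by
          show (v b - vstar b) ^ 2 = 0
          rw [hvj b hb]; ring)
        (fun h => absurd (Finset.mem_univ i) h)]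
      show (v i - vstar i) ^ 2 = _
      rw [hvi]
    have hSmin := hS ((3 : ℝ)⁻¹ * hv i) (vstar i)
    rw [← hsdef, ← hξi i] at hSmin
    have hD := hDle (v - vstar)
    rw [hnormd] at hD hkey
    have hsq : (1 - ω) * (s - vstar i) ^ 2 ≤ 0 := by linarith
    have h9 : (s - vstar i) ^ 2 = 0 := by nlinarith [sq_nonneg (s - vstar i)]
    have h10 : s - vstar i = 0 := by
      exact sub_eq_zero.mp (by nlinarith [sq_nonneg (s - vstar i)])
    linarith [h10]
  · intro hfix v
    have hkey := keyid v
    have hterm : ∀ i : Fin m,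
        3 * (vstar i - ξ i) ^ 2 + γ * Wpot r p ε (vstar i) + (3 - ω) * (v i - vstar i) ^ 2
          ≤ 3 * (v i - ξ i) ^ 2 + γ * Wpot r p ε (v i) := by
      intro i
      have hminloc : ∀ t : ℝ, (vstar i - ξ i) ^ 2 + γ / 3 * Wpot r p ε (vstar i)
          ≤ (t - ξ i) ^ 2 + γ / 3 * Wpot r p ε t := by
        intro t
        have h := hS ((3 : ℝ)⁻¹ * hv i) t
        rw [← hfix i, ← hξi i] at h
        exact h
      exact S17.strong_min hr hp hε0 hεr hγ hωabs (by linarith) (vstar i) (ξ i) hminloc (v i)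
    have hsum := Finset.sum_le_sum (fun i (_ : i ∈ Finset.univ) => hterm i)
    have hnd : ∑ i, (v i - vstar i) ^ 2 = ‖v - vstar‖ ^ 2 := by
      rw [normsq (v - vstar)]
      exact Finset.sum_congr rfl fun i _ => rfl
    have hD := hDle (v - vstar)
    simp only [Finset.sum_add_distrib, ← Finset.mul_sum] at hsum hkey
    rw [hnd] at hsum
    linarith [sq_nonneg ‖T (v - vstar)‖, sq_nonneg ‖A (v - vstar)‖]
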